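/- arXiv:2101.05949 — 3 statements merged into one kernel-verified Lean document; each statement's English description precedes it below -/
import Mathlib

section
/- Let d ≥ 1 and x ∈ ℝ^d. With J_d as defined via the infimum over probability vectors, one has J_d(x) ≥ (1/2)‖x‖₁² ≥ (1/2)‖x‖₂². -/
open scoped BigOperators

/-- The one-dimensional rate function `J`, valued in extended reals. -/
noncomputable def J1 (t : ℝ) : EReal :=
  if |t| ≤ 1 then
    ((1 / 2 * (1 + t) * Real.log (1 + t) + 1 / 2 * (1 - t) * Real.log (1 - t) : ℝ) : EReal)
  else ⊤

/-- One summand `uᵢ (J(xᵢ/uᵢ) + log(d uᵢ))` in the definition of `J_d`. -/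
noncomputable def Jterm (d : ℕ) (xi ui : ℝ) : EReal :=
  if ui = 0 then (if xi = 0 then (0 : EReal) else ⊤)
  else ((ui : ℝ) : EReal) * (J1 (xi / ui) + ((Real.log (d * ui) : ℝ) : EReal))

/-- The `d`-dimensional rate function, an infimum over probability vectors. -/
noncomputable def Jd (d : ℕ) (x : Fin d → ℝ) : EReal :=
  ⨅ u ∈ {u : Fin d → ℝ | (∀ i, 0 ≤ u i ∧ u i ≤ 1) ∧ ∑ i, u i = 1},
    ∑ i, Jterm d (x i) (u i)


lemma aux_log2t : ∀ t ∈ Set.Ico (0:ℝ) 1, 2*t ≤ Real.log (1+t) - Real.log (1-t) := by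
  set h : ℝ → ℝ := fun t => Real.log (1+t) - Real.log (1-t) - 2*t with hh
  have hcont : ContinuousOn h (Set.Ico (0:ℝ) 1) := by
    apply ContinuousOn.sub
    apply ContinuousOn.sub
    · exact (Real.continuousOn_log.comp (by fun_prop) (by
        intro t ht; simp only [Set.mem_Ico] at ht
        simp only [Set.mem_compl_iff, Set.mem_singleton_iff]; intro hc; linarith [hc]))
    · exact (Real.continuousOn_log.comp (by fun_prop) (by
        intro t ht; simp only [Set.mem_Ico] at ht
        simp only [Set.mem_compl_iff, Set.mem_singleton_iff]; intro hc; linarith [hc]))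
    · fun_prop
  have hderiv : ∀ t ∈ Set.Ioo (0:ℝ) 1, HasDerivAt h (1/(1+t) - (-1)/(1-t) - 2) t := by
    intro t ht
    obtain ⟨ht0, ht1⟩ := ht
    have h1 : HasDerivAt (fun t : ℝ => Real.log (1+t)) (1/(1+t)) t := by
      have := ((hasDerivAt_id t).const_add 1).log (by intro hc; simp at hc; linarith)
      simpa using this
    have h2 : HasDerivAt (fun t : ℝ => Real.log (1-t)) ((-1)/(1-t)) t := by
      have := ((hasDerivAt_id t).const_sub 1).log (by intro hc; simp only [id] at hc; linarith)
      simpa using this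
    have h3 : HasDerivAt (fun t : ℝ => 2*t) 2 t := by
      simpa using (hasDerivAt_id t).const_mul 2
    exact (h1.sub h2).sub h3
  have hmono : MonotoneOn h (Set.Ico (0:ℝ) 1) := by
    apply monotoneOn_of_deriv_nonneg (convex_Ico 0 1) hcont
    · intro t ht
      rw [interior_Ico] at ht
      exact (hderiv t ht).differentiableAt.differentiableWithinAt
    · intro t ht
      rw [interior_Ico] at ht
      rw [(hderiv t ht).deriv]
      obtain ⟨ht0, ht1⟩ := ht
      have hp : (0:ℝ) < 1 + t := by linarith
      have hm : (0:ℝ) < 1 - t := by linarith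
      have hpt : (0:ℝ) < (1+t)*(1-t) := mul_pos hp hm
      rw [div_sub_div _ _ hp.ne' hm.ne', sub_nonneg, le_div_iff₀ hpt]
      nlinarith
  intro t ht
  have := hmono (Set.left_mem_Ico.mpr one_pos) ht ht.1
  simp only [hh] at this
  norm_num at this
  linarith [this]

lemma aux_J_ge : ∀ t ∈ Set.Icc (0:ℝ) 1,
    t^2 ≤ (1+t)*Real.log (1+t) + (1-t)*Real.log (1-t) := by
  have main : ∀ t ∈ Set.Ico (0:ℝ) 1,
      t^2 ≤ (1+t)*Real.log (1+t) + (1-t)*Real.log (1-t) := by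
    set g : ℝ → ℝ := fun t => (1+t)*Real.log (1+t) + (1-t)*Real.log (1-t) - t^2 with hg
    have hcont : ContinuousOn g (Set.Ico (0:ℝ) 1) := by
      apply ContinuousOn.sub
      apply ContinuousOn.add
      · exact (continuousOn_const.add continuousOn_id).mul
          (Real.continuousOn_log.comp (by fun_prop) (by
            intro t ht; simp only [Set.mem_Ico] at ht
            simp only [Set.mem_compl_iff, Set.mem_singleton_iff]; intro hc; linarith [hc]))
      · exact (continuousOn_const.sub continuousOn_id).mul
          (Real.continuousOn_log.comp (by fun_prop) (by
            intro t ht; simp only [Set.mem_Ico] at ht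
            simp only [Set.mem_compl_iff, Set.mem_singleton_iff]; intro hc; linarith [hc]))
      · fun_prop
    have hderiv : ∀ t ∈ Set.Ioo (0:ℝ) 1, HasDerivAt g
        ((1*Real.log (1+t) + (1+t)*(1/(1+t))) + ((-1)*Real.log (1-t) + (1-t)*((-1)/(1-t))) - 2*t) t := by
      intro t ht
      obtain ⟨ht0, ht1⟩ := ht
      have hp : (1:ℝ)+t ≠ 0 := by intro hc; linarith
      have hm : (1:ℝ)-t ≠ 0 := by intro hc; linarith
      have l1 : HasDerivAt (fun t : ℝ => Real.log (1+t)) (1/(1+t)) t := by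
        have := ((hasDerivAt_id t).const_add 1).log (by intro hc; simp only [id] at hc; linarith)
        simpa using this
      have l2 : HasDerivAt (fun t : ℝ => Real.log (1-t)) ((-1)/(1-t)) t := by
        have := ((hasDerivAt_id t).const_sub 1).log (by intro hc; simp only [id] at hc; linarith)
        simpa using this
      have p1 : HasDerivAt (fun t : ℝ => (1+t)*Real.log (1+t))
          (1*Real.log (1+t) + (1+t)*(1/(1+t))) t :=
        ((hasDerivAt_id t).const_add 1).mul l1
      have p2 : HasDerivAt (fun t : ℝ => (1-t)*Real.log (1-t))
          ((-1)*Real.log (1-t) + (1-t)*((-1)/(1-t))) t := by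
        have := (((hasDerivAt_id t).const_sub 1)).mul l2
        exact this
      have p3 : HasDerivAt (fun t : ℝ => t^2) (2*t) t := by
        simpa using (hasDerivAt_pow 2 t)
      exact (p1.add p2).sub p3
    have hmono : MonotoneOn g (Set.Ico (0:ℝ) 1) := by
      apply monotoneOn_of_deriv_nonneg (convex_Ico 0 1) hcont
      · intro t ht
        rw [interior_Ico] at ht
        exact (hderiv t ht).differentiableAt.differentiableWithinAt
      · intro t ht
        rw [interior_Ico] at ht
        rw [(hderiv t ht).deriv]
        obtain ⟨ht0, ht1⟩ := ht
        have hp : (0:ℝ) < 1 + t := by linarith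
        have hm : (0:ℝ) < 1 - t := by linarith
        have e1 : (1+t)*(1/(1+t)) = 1 := by field_simp
        have e2 : (1-t)*((-1)/(1-t)) = -1 := by field_simp
        rw [e1, e2]
        have := aux_log2t t ⟨ht0.le, ht1⟩
        linarith
    intro t ht
    have := hmono (Set.left_mem_Ico.mpr one_pos) ht ht.1
    simp only [hg] at this
    norm_num at this
    linarith [this]
  intro t ht
  rcases lt_or_eq_of_le ht.2 with h1 | h1
  · exact main t ⟨ht.1, h1⟩
  · subst h1
    simp only [sub_self, Real.log_zero, mul_zero, add_zero]
    have := Real.log_two_gt_d9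
    norm_num
    nlinarith [this]

lemma J_lb (t : ℝ) (ht : |t| ≤ 1) :
    t^2/2 ≤ 1/2*(1+t)*Real.log (1+t) + 1/2*(1-t)*Real.log (1-t) := by
  obtain ⟨h1, h2⟩ := abs_le.mp ht
  rcases le_or_gt 0 t with h | h
  · have := aux_J_ge t ⟨h, h2⟩
    linarith
  · have := aux_J_ge (-t) ⟨by linarith, by linarith⟩
    rw [show (1 + -t) = 1 - t by ring, show (1 - -t) = 1 + t by ring] at this
    nlinarith [this]


lemma coe_sum {ι : Type*} (s : Finset ι) (f : ι → ℝ) :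
    ((∑ i ∈ s, f i : ℝ) : EReal) = ∑ i ∈ s, ((f i : ℝ) : EReal) :=
  map_sum (⟨⟨Real.toEReal, EReal.coe_zero⟩, EReal.coe_add⟩ : ℝ →+ EReal) f s

lemma Jterm_ne_bot (d : ℕ) (xi ui : ℝ) (h : 0 ≤ ui) : Jterm d xi ui ≠ ⊥ := by
  unfold Jterm
  split_ifs with h0 h1
  · simp
  · simp
  · have hpos : 0 < ui := lt_of_le_of_ne h (Ne.symm h0)
    unfold J1
    split_ifs with h2
    · rw [← EReal.coe_add, ← EReal.coe_mul]
      exact EReal.coe_ne_bot _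
    · rw [EReal.top_add_coe, EReal.coe_mul_top_of_pos (by exact_mod_cast hpos)]
      simp

lemma sum_ne_bot {ι : Type*} (s : Finset ι) (f : ι → EReal)
    (h : ∀ i ∈ s, f i ≠ ⊥) : ∑ i ∈ s, f i ≠ ⊥ := by
  classical
  induction s using Finset.induction_on with
  | empty => simp
  | insert _ _ hni ih =>
    rw [Finset.sum_insert hni]
    rw [Ne, EReal.add_eq_bot_iff]
    push_neg
    exact ⟨h _ (Finset.mem_insert_self _ _),
      ih fun i hi => h i (Finset.mem_insert_of_mem hi)⟩

lemma term_ge (d : ℕ) (xi ui : ℝ) (h0 : 0 ≤ ui) (hx : ui = 0 → xi = 0) :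
    ((xi^2/(2*ui) + ui * Real.log (d*ui) : ℝ) : EReal) ≤ Jterm d xi ui := by
  rcases eq_or_lt_of_le h0 with h | h
  · have hxi := hx h.symm
    simp [Jterm, ← h, hxi]
  · unfold Jterm
    rw [if_neg h.ne']
    unfold J1
    split_ifs with h2
    · rw [← EReal.coe_add, ← EReal.coe_mul, EReal.coe_le_coe_iff]
      have hJ := J_lb (xi/ui) h2
      have key : xi^2/(2*ui) ≤ ui * (1/2*(1+xi/ui)*Real.log (1+xi/ui) + 1/2*(1-xi/ui)*Real.log (1-xi/ui)) := by
        have := mul_le_mul_of_nonneg_left hJ h0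
        have e : ui * ((xi/ui)^2/2) = xi^2/(2*ui) := by
          field_simp
        linarith [this, e.symm.le, e.le]
      have expand : ui * (1/2*(1+xi/ui)*Real.log (1+xi/ui) + 1/2*(1-xi/ui)*Real.log (1-xi/ui) + Real.log (d*ui))
          = ui * (1/2*(1+xi/ui)*Real.log (1+xi/ui) + 1/2*(1-xi/ui)*Real.log (1-xi/ui)) + ui * Real.log (d*ui) := by ring
      rw [expand]
      linarith
    · rw [EReal.top_add_coe, EReal.coe_mul_top_of_pos (by exact_mod_cast h)]
      exact le_top

lemma ent_nonneg (d : ℕ) (hd : 1 ≤ d) (u : Fin d → ℝ) (h0 : ∀ i, 0 ≤ u i)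
    (hsum : ∑ i, u i = 1) : 0 ≤ ∑ i, u i * Real.log (d * u i) := by
  have hd' : (0:ℝ) < d := by exact_mod_cast hd
  have key : ∀ i, u i - 1/d ≤ u i * Real.log (d * u i) := by
    intro i
    rcases eq_or_lt_of_le (h0 i) with h | h
    · rw [← h]
      simp
    · have hs : 0 < (d:ℝ) * u i := by positivity
      have hlog := Real.one_sub_inv_le_log_of_pos hs
      have h2 : u i * (1 - ((d:ℝ)*u i)⁻¹) ≤ u i * Real.log ((d:ℝ)*u i) :=
        mul_le_mul_of_nonneg_left hlog (h0 i)
      have h3 : u i * (1 - ((d:ℝ)*u i)⁻¹) = u i - 1/d := by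
        field_simp
      linarith
  have : (0:ℝ) = ∑ i : Fin d, (u i - 1/d) := by
    rw [Finset.sum_sub_distrib, hsum, Finset.sum_const, Finset.card_univ, Fintype.card_fin]
    rw [nsmul_eq_mul, mul_one_div_cancel hd'.ne', sub_self]
  rw [this]
  exact Finset.sum_le_sum fun i _ => key i

lemma cs_ineq (d : ℕ) (x u : Fin d → ℝ) (h0 : ∀ i, 0 ≤ u i)
    (hsum : ∑ i, u i = 1) (hx : ∀ i, u i = 0 → x i = 0) :
    (∑ i, |x i|)^2 ≤ ∑ i, (x i)^2 / u i := by
  have := Finset.sum_mul_sq_le_sq_mul_sq Finset.univ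
    (fun i => |x i| / Real.sqrt (u i)) (fun i => Real.sqrt (u i))
  have e1 : ∀ i : Fin d, |x i| / Real.sqrt (u i) * Real.sqrt (u i) = |x i| := by
    intro i
    rcases eq_or_lt_of_le (h0 i) with h | h
    · rw [hx i h.symm]; simp
    · rw [div_mul_cancel₀]
      exact (Real.sqrt_pos.mpr h).ne'
  have e2 : ∀ i : Fin d, (|x i| / Real.sqrt (u i))^2 = (x i)^2 / u i := by
    intro i
    rw [div_pow, sq_abs, Real.sq_sqrt (h0 i)]
  have e3 : ∀ i : Fin d, (Real.sqrt (u i))^2 = u i := fun i => Real.sq_sqrt (h0 i)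
  simp only [e1, e2, e3, hsum, mul_one] at this
  exact this

/-- `J_d(x) ≥ (1/2)‖x‖₁² ≥ (1/2)‖x‖₂²`. -/
theorem stmt2 (d : ℕ) (hd : 1 ≤ d) (x : Fin d → ℝ) :
    (((1 / 2 * (∑ i, |x i|) ^ 2 : ℝ)) : EReal) ≤ Jd d x ∧
    (1 / 2 * ∑ i, (x i) ^ 2 : ℝ) ≤ 1 / 2 * (∑ i, |x i|) ^ 2 := by
  constructor
  · unfold Jd
    apply le_iInf₂
    intro u hu
    obtain ⟨hbd, hsum⟩ := hu
    have h0 : ∀ i, 0 ≤ u i := fun i => (hbd i).1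
    by_cases hbad : ∃ i, u i = 0 ∧ x i ≠ 0
    · obtain ⟨i0, hui0, hxi0⟩ := hbad
      have htop : ∑ i, Jterm d (x i) (u i) = ⊤ := by
        rw [← Finset.add_sum_erase _ _ (Finset.mem_univ i0)]
        have h1 : Jterm d (x i0) (u i0) = ⊤ := by simp [Jterm, hui0, hxi0]
        rw [h1, EReal.top_add_of_ne_bot
          (sum_ne_bot _ _ fun i _ => Jterm_ne_bot d _ _ (h0 i))]
      rw [htop]
      exact le_top
    · push_neg at hbad
      have hx : ∀ i, u i = 0 → x i = 0 := hbad
      calc (((1 / 2 * (∑ i, |x i|) ^ 2 : ℝ)) : EReal)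
          ≤ ((∑ i, ((x i)^2/(2*u i) + u i * Real.log (d*u i)) : ℝ) : EReal) := by
            rw [EReal.coe_le_coe_iff]
            have hcs := cs_ineq d x u h0 hsum hx
            have hent := ent_nonneg d hd u h0 hsum
            have hsplit : ∑ i, ((x i)^2/(2*u i) + u i * Real.log (d*u i))
                = (∑ i, (x i)^2/(u i))/2 + ∑ i, u i * Real.log (d*u i) := by
              rw [Finset.sum_add_distrib, Finset.sum_div]
              congr 1
              apply Finset.sum_congr rfl
              intro i _
              rw [div_div, mul_comm]
            rw [hsplit]
            linarith
        _ = ∑ i, (((x i)^2/(2*u i) + u i * Real.log (d*u i) : ℝ) : EReal) := coe_sum _ _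
        _ ≤ ∑ i, Jterm d (x i) (u i) :=
            Finset.sum_le_sum fun i _ => term_ge d (x i) (u i) (h0 i) (hx i)
  · have key : ∑ i, (x i)^2 ≤ (∑ i, |x i|)^2 := by
      calc ∑ i, (x i)^2 = ∑ i, |x i|^2 := by simp [sq_abs]
        _ ≤ (∑ i, |x i|)^2 := Finset.sum_sq_le_sq_sum_of_nonneg fun i _ => abs_nonneg _
    linarith
end

section
/- Let f : ℝ^d → [0,∞) satisfy f(x) ≤ C e^{−c‖x‖²} for all ‖x‖² ≥ 2/c (with C, c > 0), and f(x) ≤ C'(1 + ‖x‖^{2−d}) for d ≥ 3 (resp. f(x) ≤ C'(1 + log(1/‖x‖)⁺) for d = 2) near 0. If α ∈ (d/2, 2) and β > 0, then ∫_{ℝ^d × (1,∞)} min(e^{βw} f(x), 1) · α w^{−(1+α)} dx dw < ∞. -/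
open MeasureTheory
open scoped ENNReal

lemma tail_int (α : ℝ) (hα : 0 < α) (a : ℝ) (ha : 0 < a) :
    ∫⁻ w in Set.Ioi a, ENNReal.ofReal (α * w ^ (-(1+α))) = ENNReal.ofReal (a ^ (-α)) := by
  rw [← ofReal_integral_eq_lintegral_ofReal]
  · rw [integral_const_mul, integral_Ioi_rpow_of_lt (by linarith) ha]
    have h1 : -(1+α) + 1 = -α := by ring
    rw [h1]
    congr 1
    field_simp
  · exact (integrableOn_Ioi_rpow_of_lt (by linarith) ha).const_mul α
  · filter_upwards [ae_restrict_mem measurableSet_Ioi] with w hw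
    have hw0 : 0 < w := ha.trans hw
    positivity

lemma gauss_int (d : ℕ) (b : ℝ) (hb : 0 < b) :
    Integrable (fun x : EuclideanSpace ℝ (Fin d) => Real.exp (-b * ‖x‖ ^ 2)) := by
  have h := (GaussianFourier.integrable_cexp_neg_mul_sq_norm_add_of_euclideanSpace (ι := Fin d)
    (b := (b : ℂ)) (by simpa using hb) 0 0).norm
  refine h.congr (Filter.Eventually.of_forall fun x => ?_)
  simp only [zero_mul, add_zero, inner_zero_left, Complex.ofReal_zero, mul_zero]
  rw [show (-(b:ℂ) * (‖x‖:ℂ) ^ 2) = ((-b * ‖x‖^2 : ℝ) : ℂ) by push_cast; ring]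
  rw [Complex.norm_exp]
  simp [← Complex.ofReal_pow]

/-- If `f : ℝ^d → [0,∞)` satisfies a Gaussian decay bound at infinity and the Green-function
type bound near the origin (`C'(1 + log(1/‖x‖)⁺)` if `d = 2`, `C'(1 + ‖x‖^{2−d})` if `d ≥ 3`),
and `α ∈ (d/2, 2)`, `β > 0`, then
`∫_{ℝ^d × (1,∞)} min(e^{βw} f(x), 1) · α w^{−(1+α)} dx dw < ∞`. -/
theorem stmt11 (d : ℕ) (hd : 2 ≤ d) (α β C c C' : ℝ)
    (hα1 : (d : ℝ) / 2 < α) (hα2 : α < 2) (hβ : 0 < β)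
    (hC : 0 < C) (hc : 0 < c) (hC' : 0 < C')
    (f : EuclideanSpace ℝ (Fin d) → ℝ) (hf : Measurable f) (hf0 : ∀ x, 0 ≤ f x)
    (hdecay : ∀ x : EuclideanSpace ℝ (Fin d), 2 / c ≤ ‖x‖ ^ 2 →
      f x ≤ C * Real.exp (-c * ‖x‖ ^ 2))
    (h2 : d = 2 → ∀ x : EuclideanSpace ℝ (Fin d), x ≠ 0 →
      f x ≤ C' * (1 + max (Real.log (1 / ‖x‖)) 0))
    (h3 : 3 ≤ d → ∀ x : EuclideanSpace ℝ (Fin d), x ≠ 0 →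
      f x ≤ C' * (1 + ‖x‖ ^ ((2 : ℝ) - d))) :
    (∫⁻ x, ∫⁻ w in Set.Ioi (1 : ℝ),
      ENNReal.ofReal (min (Real.exp (β * w) * f x) 1 * (α * w ^ (-(1 + α))))) < ⊤ := by
  have hα0 : 0 < α := lt_trans (by positivity : (0:ℝ) < d / 2) hα1
  set K : ℝ := max (2*β/c) (2/c) with hKdef
  have hK2 : 2/c ≤ K := le_max_right _ _
  have hKβ : 2*β/c ≤ K := le_max_left _ _
  have hKpos : 0 < K := lt_of_lt_of_le (by positivity) hK2
  set p : ℝ → ℝ≥0∞ := fun w => ENNReal.ofReal (α * w ^ (-(1+α))) with hp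
  have hpmeas : Measurable p := by fun_prop
  -- inner bound
  have inner_bound : ∀ x : EuclideanSpace ℝ (Fin d),
      (∫⁻ w in Set.Ioi (1:ℝ),
        ENNReal.ofReal (min (Real.exp (β*w) * f x) 1 * (α * w ^ (-(1+α)))))
      ≤ ENNReal.ofReal ((max (‖x‖^2 / K) 1) ^ (-α))
        + ENNReal.ofReal (C * Real.exp (-(c/2) * ‖x‖^2)) := by
    intro x
    set t : ℝ := ‖x‖^2 / K with ht
    set Ce : ℝ := C * Real.exp (-(c/2) * ‖x‖^2) with hCe
    have hCe0 : 0 ≤ Ce := by positivity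
    have hstep : ∀ w ∈ Set.Ioi (1:ℝ),
        ENNReal.ofReal (min (Real.exp (β*w) * f x) 1 * (α * w ^ (-(1+α)))) ≤
          Set.indicator (Set.Ici t) p w + ENNReal.ofReal Ce * p w := by
      intro w hw
      have hw1 : 1 < w := hw
      have hw0 : 0 < w := lt_trans one_pos hw1
      have hm0 : 0 ≤ min (Real.exp (β*w) * f x) 1 :=
        le_min (mul_nonneg (Real.exp_pos _).le (hf0 x)) zero_le_one
      rw [ENNReal.ofReal_mul hm0]
      by_cases hcase : t ≤ w
      · calc ENNReal.ofReal (min (Real.exp (β*w) * f x) 1) * p w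
            ≤ 1 * p w := by
              gcongr
              exact ENNReal.ofReal_le_one.mpr (min_le_right _ _)
          _ = Set.indicator (Set.Ici t) p w := by
              rw [one_mul, Set.indicator_of_mem (Set.mem_Ici.mpr hcase)]
          _ ≤ _ := le_self_add
      · push_neg at hcase
        have hKw : K * w < ‖x‖^2 := by
          rw [ht] at hcase
          calc K * w < K * t := by exact mul_lt_mul_of_pos_left hcase hKpos
            _ = ‖x‖^2 := by rw [ht]; field_simp
        have hx2 : 2/c ≤ ‖x‖^2 := by
          have : K ≤ K * w := le_mul_of_one_le_right hKpos.le hw1.le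
          linarith
        have hfx := hdecay x hx2
        have hbw : β * w ≤ (c/2) * ‖x‖^2 := by
          have h1 : 2*β/c ≤ K := hKβ
          have h2 : (2*β/c) * w ≤ K * w := by
            apply mul_le_mul_of_nonneg_right h1 hw0.le
          have h3 : (2*β/c) * w < ‖x‖^2 := lt_of_le_of_lt h2 hKw
          calc β * w = (c/2) * ((2*β/c) * w) := by field_simp
            _ ≤ (c/2) * ‖x‖^2 := by
              apply mul_le_mul_of_nonneg_left h3.le (by positivity)
        have hmin : min (Real.exp (β*w) * f x) 1 ≤ Ce := by
          refine le_trans (min_le_left _ _) ?_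
          calc Real.exp (β*w) * f x ≤ Real.exp (β*w) * (C * Real.exp (-c * ‖x‖^2)) := by
                apply mul_le_mul_of_nonneg_left hfx (Real.exp_pos _).le
            _ = C * Real.exp (β*w + (-c * ‖x‖^2)) := by rw [Real.exp_add]; ring
            _ ≤ Ce := by
              rw [hCe]
              apply mul_le_mul_of_nonneg_left _ hC.le
              apply Real.exp_le_exp.mpr
              nlinarith [sq_nonneg ‖x‖]
        calc ENNReal.ofReal (min (Real.exp (β*w) * f x) 1) * p w
            ≤ ENNReal.ofReal Ce * p w :=
              mul_le_mul_of_nonneg_right (ENNReal.ofReal_le_ofReal hmin) zero_le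
          _ ≤ _ := le_add_self
    calc (∫⁻ w in Set.Ioi (1:ℝ),
          ENNReal.ofReal (min (Real.exp (β*w) * f x) 1 * (α * w ^ (-(1+α)))))
        ≤ ∫⁻ w in Set.Ioi (1:ℝ),
            (Set.indicator (Set.Ici t) p w + ENNReal.ofReal Ce * p w) := by
          apply lintegral_mono_ae
          filter_upwards [ae_restrict_mem measurableSet_Ioi] with w hw
          exact hstep w hw
      _ = (∫⁻ w in Set.Ioi (1:ℝ), Set.indicator (Set.Ici t) p w)
          + ENNReal.ofReal Ce * ∫⁻ w in Set.Ioi (1:ℝ), p w := by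
          rw [lintegral_add_left (hpmeas.indicator measurableSet_Ici),
            lintegral_const_mul _ hpmeas]
      _ ≤ ENNReal.ofReal ((max t 1) ^ (-α)) + ENNReal.ofReal Ce := by
          gcongr
          · -- indicator part
            rw [lintegral_indicator measurableSet_Ici,
              Measure.restrict_restrict measurableSet_Ici]
            have hsub : Set.Ici t ∩ Set.Ioi 1 ⊆ Set.Ici (max t 1) := by
              rintro w ⟨h1, h2⟩
              exact max_le h1 (le_of_lt (Set.mem_Ioi.mp h2))
            calc ∫⁻ w in Set.Ici t ∩ Set.Ioi 1, p w
                ≤ ∫⁻ w in Set.Ici (max t 1), p w := lintegral_mono_set hsub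
              _ = ∫⁻ w in Set.Ioi (max t 1), p w := by
                  apply setLIntegral_congr
                  exact (Ioi_ae_eq_Ici (a := max t 1)).symm
              _ = ENNReal.ofReal ((max t 1) ^ (-α)) :=
                  tail_int α hα0 _ (lt_of_lt_of_le one_pos (le_max_right _ _))
          · -- constant part
            rw [tail_int α hα0 1 one_pos, Real.one_rpow]
            simp
    -- done inner
  -- outer
  have houter : (∫⁻ x, ∫⁻ w in Set.Ioi (1 : ℝ),
      ENNReal.ofReal (min (Real.exp (β * w) * f x) 1 * (α * w ^ (-(1 + α)))))
      ≤ (∫⁻ x : EuclideanSpace ℝ (Fin d), ENNReal.ofReal ((max (‖x‖^2 / K) 1) ^ (-α)))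
        + ∫⁻ x : EuclideanSpace ℝ (Fin d), ENNReal.ofReal (C * Real.exp (-(c/2) * ‖x‖^2)) := by
    calc _ ≤ ∫⁻ x, (ENNReal.ofReal ((max (‖x‖^2 / K) 1) ^ (-α))
          + ENNReal.ofReal (C * Real.exp (-(c/2) * ‖x‖^2))) := lintegral_mono inner_bound
      _ ≤ _ := by
          rw [lintegral_add_left (by fun_prop)]
  refine lt_of_le_of_lt houter (ENNReal.add_lt_top.mpr ⟨?_, ?_⟩)
  · -- polynomial part
    have hdlt : (d : ℝ) < 2 * α := by linarith
    have hint : Integrable (fun x : EuclideanSpace ℝ (Fin d) =>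
        (4 * max 1 K) ^ α * (1 + ‖x‖) ^ (-(2*α))) := by
      apply Integrable.const_mul
      apply integrable_one_add_norm (E := EuclideanSpace ℝ (Fin d))
      rw [finrank_euclideanSpace_fin]
      exact hdlt
    refine lt_of_le_of_lt (lintegral_mono fun x => ?_) hint.lintegral_lt_top
    apply ENNReal.ofReal_le_ofReal
    have hMK : (0:ℝ) < max 1 K := lt_of_lt_of_le one_pos (le_max_left _ _)
    have hb0 : (0:ℝ) < (1 + ‖x‖)^2 / (4 * max 1 K) := by positivity
    have hle : (1 + ‖x‖)^2 / (4 * max 1 K) ≤ max (‖x‖^2 / K) 1 := by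
      have h1 : (1 + ‖x‖)^2 ≤ 2 * (1 + ‖x‖^2) := by nlinarith [sq_nonneg (1 - ‖x‖), norm_nonneg x]
      have h2 : (1 + ‖x‖^2) / (2 * max 1 K) ≤ max (‖x‖^2 / K) 1 := by
        rw [div_le_iff₀ (by positivity)]
        have ha : 1 ≤ max (‖x‖^2 / K) 1 := le_max_right _ _
        have hbb : ‖x‖^2 / K ≤ max (‖x‖^2 / K) 1 := le_max_left _ _
        have hKle : K ≤ max 1 K := le_max_right _ _
        have hone : 1 ≤ max 1 K := le_max_left _ _
        have hx2 : ‖x‖^2 ≤ max (‖x‖^2 / K) 1 * max 1 K := by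
          calc ‖x‖^2 = (‖x‖^2 / K) * K := by field_simp
            _ ≤ max (‖x‖^2 / K) 1 * max 1 K := by
                apply mul_le_mul hbb hKle hKpos.le
                exact le_trans (by positivity) hbb
        nlinarith [mul_le_mul ha hone zero_le_one (le_trans zero_le_one ha)]
      calc (1 + ‖x‖)^2 / (4 * max 1 K) ≤ 2 * (1 + ‖x‖^2) / (4 * max 1 K) := by
            apply div_le_div_of_nonneg_right h1 (by positivity) |>.trans_eq rfl
        _ = (1 + ‖x‖^2) / (2 * max 1 K) := by ring
        _ ≤ max (‖x‖^2 / K) 1 := h2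
    calc (max (‖x‖^2 / K) 1) ^ (-α)
        ≤ ((1 + ‖x‖)^2 / (4 * max 1 K)) ^ (-α) :=
          Real.rpow_le_rpow_of_nonpos hb0 hle (by linarith)
      _ = (4 * max 1 K) ^ α * (1 + ‖x‖) ^ (-(2*α)) := by
          rw [Real.div_rpow (by positivity) (by positivity)]
          rw [← Real.rpow_natCast (1 + ‖x‖) 2, ← Real.rpow_mul (by positivity)]
          rw [Real.rpow_neg (by positivity : (0:ℝ) ≤ 4 * max 1 K)]
          rw [div_eq_mul_inv, mul_comm]
          norm_num
  · -- gaussian part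
    have hint : Integrable (fun x : EuclideanSpace ℝ (Fin d) =>
        C * Real.exp (-(c/2) * ‖x‖^2)) := (gauss_int d (c/2) (by positivity)).const_mul C
    exact hint.lintegral_lt_top
end

section
/- Let ω ≥ 0 be a random variable with P(ω > t) ≤ C t^{−α} for all t ≥ 1, where α ∈ (1,2), and let μ = E[ω]. For β ∈ (0,1] and k ≥ 1 with βk ≥ 1, let λ = log E[exp(β(ω−μ)1_{ω≤k})]. Then λ ≤ C' e^{βk} β^α for a constant C' depending only on C, α, μ. -/
open MeasureTheory

open Real Set in

lemma taylor_exp {x : ℝ} (hx : |x| ≤ 1) : Real.exp x ≤ 1 + x + x ^ 2 := by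
  have h := Real.exp_bound hx (n := 2) (by norm_num)
  have h2 : ∑ m ∈ Finset.range 2, x ^ m / m.factorial = 1 + x := by
    simp [Finset.sum_range_succ]
  rw [h2] at h
  have h3 : ((Nat.succ 2 : ℕ) : ℝ) / ((Nat.factorial 2 : ℕ) * (2:ℕ)) = 3/4 := by
    norm_num [Nat.factorial]
  rw [h3] at h
  have := (abs_le.1 h).2
  nlinarith [sq_abs x, sq_nonneg x]

open Real Set in

lemma second_moment {C α : ℝ} (hC : 0 < C) (hα1 : 1 < α) (hα2 : α < 2)
    {Ω : Type} [MeasurableSpace Ω] (μ : Measure Ω) [IsProbabilityMeasure μ]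
    (X : Ω → ℝ) (hX : Measurable X) (hXnn : ∀ a, 0 ≤ X a)
    (tail : ∀ t : ℝ, 1 ≤ t → (μ {a | t < X a}).toReal ≤ C * t ^ (-α))
    (m : ℝ) (hm : 1 ≤ m) :
    ∫ a, (min (X a) m) ^ 2 ∂μ ≤ (4 + 8 * C / (2 - α)) * m ^ (2 - α) := by
  have hm0 : (0:ℝ) < m := lt_of_lt_of_le one_pos hm
  set f : Ω → ℝ := fun a => (min (X a) m) ^ 2 with hf
  have hfm : Measurable f := (hX.min measurable_const).pow_const 2
  have hfnn : ∀ a, 0 ≤ f a := fun a => sq_nonneg _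
  have hfle : ∀ a, f a ≤ m ^ 2 := by
    intro a
    have h1 : min (X a) m ≤ m := min_le_right _ _
    have h0 : 0 ≤ min (X a) m := le_min (hXnn a) hm0.le
    exact pow_le_pow_left₀ h0 h1 2
  have hint : Integrable f μ := by
    refine Integrable.mono' (integrable_const (m ^ 2)) hfm.aestronglyMeasurable ?_
    filter_upwards with a
    rw [Real.norm_eq_abs, abs_of_nonneg (hfnn a)]; exact hfle a
  -- layer cake
  have key := hint.integral_eq_integral_Ioc_meas_le (M := m ^ 2)
    (Filter.Eventually.of_forall hfnn) (Filter.Eventually.of_forall hfle)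
  rw [key]; simp only [measureReal_def]
  -- measurability of the tail function
  have g_anti : Antitone (fun t : ℝ => μ {a | t ≤ f a}) := by
    intro s t hst
    exact measure_mono (fun a ha => le_trans hst ha)
  have g_mble : Measurable (fun t : ℝ => (μ {a | t ≤ f a}).toReal) :=
    g_anti.measurable.ennreal_toReal
  have g_nn : ∀ t : ℝ, 0 ≤ (μ {a | t ≤ f a}).toReal := fun t => ENNReal.toReal_nonneg
  have g_le_one : ∀ t : ℝ, (μ {a | t ≤ f a}).toReal ≤ 1 := by
    intro t
    exact (ENNReal.toReal_le_of_le_ofReal one_pos.le (by simpa using prob_le_one))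
  have g_intOn : ∀ s : Set ℝ, MeasurableSet s → volume s < ⊤ →
      IntegrableOn (fun t : ℝ => (μ {a | t ≤ f a}).toReal) s := by
    intro s hs hsf
    have : IsFiniteMeasure (volume.restrict s) := ⟨by rwa [Measure.restrict_apply_univ]⟩
    refine Integrable.mono' (integrable_const 1) g_mble.aestronglyMeasurable ?_
    filter_upwards with t
    rw [Real.norm_eq_abs, abs_of_nonneg (g_nn t)]; exact g_le_one t
  have hmono : 1 ≤ m ^ (2 - α) :=
    Real.one_le_rpow hm (by linarith)
  by_cases hM : m ^ 2 ≤ 4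
  · -- small case: bound by the measure of the interval
    have h1 : ∫ t in Ioc 0 (m^2), (μ {a | t ≤ f a}).toReal ≤
        ∫ t in Ioc 0 (m^2), (1:ℝ) := by
      refine setIntegral_mono_on (g_intOn _ measurableSet_Ioc (by simp)) ?_ measurableSet_Ioc ?_
      · exact integrableOn_const measure_Ioc_lt_top.ne
      · intro t ht; exact g_le_one t
    have h2 : ∫ t in Ioc 0 (m^2), (1:ℝ) = m ^ 2 := by
      rw [setIntegral_const, smul_eq_mul, mul_one, Real.volume_real_Ioc_of_le (by positivity), sub_zero]
    have h3 : ∫ t in Ioc 0 (m^2), (μ {a | t ≤ f a}).toReal ≤ m ^ 2 := le_of_le_of_eq h1 h2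
    have h8 : 0 ≤ 8 * C / (2 - α) := by
      apply div_nonneg (by linarith) (by linarith)
    nlinarith
  · push_neg at hM
    have hM4 : (4:ℝ) ≤ m ^ 2 := hM.le
    have hsplit : Ioc (0:ℝ) (m^2) = Ioc 0 4 ∪ Ioc 4 (m^2) :=
      (Ioc_union_Ioc_eq_Ioc (by norm_num) hM4).symm
    have hdisj : Disjoint (Ioc (0:ℝ) 4) (Ioc 4 (m^2)) := Set.Ioc_disjoint_Ioc_of_le le_rfl
    have hint1 : IntegrableOn (fun t : ℝ => (μ {a | t ≤ f a}).toReal) (Ioc 0 4) :=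
      g_intOn _ measurableSet_Ioc (by simp)
    have hint2 : IntegrableOn (fun t : ℝ => (μ {a | t ≤ f a}).toReal) (Ioc 4 (m^2)) :=
      g_intOn _ measurableSet_Ioc (by simp)
    rw [hsplit, setIntegral_union hdisj measurableSet_Ioc hint1 hint2]
    -- first piece ≤ 4
    have p1 : ∫ t in Ioc (0:ℝ) 4, (μ {a | t ≤ f a}).toReal ≤ 4 := by
      have h1 : ∫ t in Ioc (0:ℝ) 4, (μ {a | t ≤ f a}).toReal ≤ ∫ t in Ioc (0:ℝ) 4, (1:ℝ) := by
        refine setIntegral_mono_on hint1 ?_ measurableSet_Ioc ?_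
        · exact integrableOn_const measure_Ioc_lt_top.ne
        · intro t ht; exact g_le_one t
      have h2 : ∫ t in Ioc (0:ℝ) 4, (1:ℝ) = 4 := by
        rw [setIntegral_const, smul_eq_mul, mul_one, Real.volume_real_Ioc_of_le (by norm_num), sub_zero]
      linarith [le_of_le_of_eq h1 h2]
    -- pointwise tail bound on (4, m^2]
    have pointw : ∀ t ∈ Ioc (4:ℝ) (m^2),
        (μ {a | t ≤ f a}).toReal ≤ 4 * C * t ^ (-(α/2)) := by
      intro t ht
      obtain ⟨ht4, htM⟩ := ht
      have ht0 : (0:ℝ) < t := by linarith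
      set r : ℝ := t ^ ((2:ℝ)⁻¹) with hr
      have hr2 : (2:ℝ) ≤ r := by
        have h4 : ((4:ℝ)) ^ ((2:ℝ)⁻¹) = 2 := by
          have : ((2:ℝ)^(2:ℕ)) ^ ((2:ℝ)⁻¹) = 2 := by
            rw [← Real.rpow_natCast 2 2, ← Real.rpow_mul (by norm_num)]; norm_num
          norm_num at this ⊢
        calc (2:ℝ) = (4:ℝ) ^ ((2:ℝ)⁻¹) := h4.symm
          _ ≤ r := Real.rpow_le_rpow (by norm_num) ht4.le (by norm_num)
      have hr0 : (0:ℝ) < r := by linarith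
      have hrsq : r ^ (2:ℕ) = t := by
        rw [hr, ← Real.rpow_natCast (t ^ ((2:ℝ)⁻¹)) 2, ← Real.rpow_mul ht0.le]
        norm_num
      have hsub : {a | t ≤ f a} ⊆ {a | r/2 < X a} := by
        intro a ha
        simp only [Set.mem_setOf_eq] at ha ⊢
        have h1 : t ≤ (X a) ^ 2 := by
          refine le_trans ha ?_
          have := min_le_left (X a) m
          have h0 : 0 ≤ min (X a) m := le_min (hXnn a) hm0.le
          exact pow_le_pow_left₀ h0 this 2
        have h2 : r ≤ X a := by
          have : r ^ (2:ℕ) ≤ (X a) ^ (2:ℕ) := by rw [hrsq]; exact h1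
          exact le_of_pow_le_pow_left₀ (by norm_num) (hXnn a) this
        linarith
      have hmeas : (μ {a | t ≤ f a}).toReal ≤ (μ {a | r/2 < X a}).toReal := by
        refine ENNReal.toReal_le_toReal (measure_ne_top _ _) (measure_ne_top _ _) |>.mpr ?_
        exact measure_mono hsub
      have htail := tail (r/2) (by linarith)
      have hcalc : C * (r/2) ^ (-α) ≤ 4 * C * t ^ (-(α/2)) := by
        have hrd : (r/2) ^ (-α) = r ^ (-α) * (2:ℝ) ^ α := by
          rw [div_rpow hr0.le (by norm_num : (0:ℝ) ≤ 2), Real.rpow_neg (by norm_num : (0:ℝ) ≤ 2),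
            div_inv_eq_mul]
        have hrt : r ^ (-α) = t ^ (-(α/2)) := by
          rw [hr, ← Real.rpow_mul ht0.le]
          ring_nf
        have h2a : (2:ℝ) ^ α ≤ 4 := by
          calc (2:ℝ) ^ α ≤ (2:ℝ) ^ (2:ℝ) :=
                Real.rpow_le_rpow_of_exponent_le (by norm_num) hα2.le
            _ = 4 := by
                rw [show ((2:ℝ):ℝ) = ((2:ℕ):ℝ) by norm_num, Real.rpow_natCast]; norm_num
        rw [hrd, hrt]
        have htnn : (0:ℝ) ≤ t ^ (-(α/2)) := Real.rpow_nonneg ht0.le _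
        calc C * (t ^ (-(α/2)) * (2:ℝ) ^ α) = (2:ℝ) ^ α * C * t ^ (-(α/2)) := by ring
          _ ≤ 4 * C * t ^ (-(α/2)) := by
              apply mul_le_mul_of_nonneg_right _ htnn
              exact mul_le_mul_of_nonneg_right h2a hC.le
      exact le_trans hmeas (le_trans htail hcalc)
    -- integrate the bound on (4, m^2]
    have hRint : IntegrableOn (fun t : ℝ => 4 * C * t ^ (-(α/2))) (Ioc 4 (m^2)) := by
      have : IntervalIntegrable (fun t : ℝ => t ^ (-(α/2))) volume 4 (m^2) :=
        intervalIntegral.intervalIntegrable_rpow' (by linarith)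
      rw [intervalIntegrable_iff, uIoc_of_le hM4] at this
      exact this.const_mul _
    have p2 : ∫ t in Ioc (4:ℝ) (m^2), (μ {a | t ≤ f a}).toReal ≤
        8 * C / (2 - α) * m ^ (2 - α) := by
      have h1 : ∫ t in Ioc (4:ℝ) (m^2), (μ {a | t ≤ f a}).toReal ≤
          ∫ t in Ioc (4:ℝ) (m^2), 4 * C * t ^ (-(α/2)) :=
        setIntegral_mono_on hint2 hRint measurableSet_Ioc pointw
      have h2 : ∫ t in Ioc (4:ℝ) (m^2), 4 * C * t ^ (-(α/2)) =
          4 * C * ((m^2) ^ (-(α/2) + 1) - 4 ^ (-(α/2) + 1)) / (-(α/2) + 1) := by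
        rw [← intervalIntegral.integral_of_le hM4, intervalIntegral.integral_const_mul,
          integral_rpow (Or.inl (by linarith))]
        ring
      have hexp0 : (0:ℝ) < -(α/2) + 1 := by linarith
      have hmM : ((m:ℝ)^2) ^ (-(α/2) + 1) = m ^ (2 - α) := by
        rw [← Real.rpow_natCast m 2, ← Real.rpow_mul hm0.le]
        ring_nf
      have h4pos : (0:ℝ) ≤ (4:ℝ) ^ (-(α/2) + 1) := Real.rpow_nonneg (by norm_num) _
      have hnum : 4 * C * ((m^2) ^ (-(α/2) + 1) - 4 ^ (-(α/2) + 1)) ≤ 4 * C * m ^ (2 - α) := by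
        rw [hmM]; nlinarith
      have h3 : 4 * C * ((m^2) ^ (-(α/2) + 1) - 4 ^ (-(α/2) + 1)) / (-(α/2) + 1) ≤
          4 * C * m ^ (2 - α) / (-(α/2) + 1) :=
        (div_le_div_iff_of_pos_right hexp0).mpr hnum
      have h4 : 4 * C * m ^ (2 - α) / (-(α/2) + 1) = 8 * C / (2 - α) * m ^ (2 - α) := by
        rw [show -(α/2) + 1 = (2-α)/2 by ring, div_div_eq_mul_div]
        ring
      calc ∫ t in Ioc (4:ℝ) (m^2), (μ {a | t ≤ f a}).toReal
          ≤ ∫ t in Ioc (4:ℝ) (m^2), 4 * C * t ^ (-(α/2)) := h1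
        _ = 4 * C * ((m^2) ^ (-(α/2) + 1) - 4 ^ (-(α/2) + 1)) / (-(α/2) + 1) := h2
        _ ≤ 4 * C * m ^ (2 - α) / (-(α/2) + 1) := h3
        _ = 8 * C / (2 - α) * m ^ (2 - α) := h4
    have hfinal : 4 + 8 * C / (2 - α) * m ^ (2 - α) ≤ (4 + 8 * C / (2 - α)) * m ^ (2 - α) := by
      have h8 : 0 ≤ 8 * C / (2 - α) := by
        apply div_nonneg (by linarith) (by linarith)
      nlinarith
    linarith


open Real Set in
set_option maxHeartbeats 4000000 in
/-- Bound on the log-moment generating function of the truncated centered environment: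
if `ω ≥ 0` has tail `P(ω > t) ≤ C t^{−α}` for `t ≥ 1` with `α ∈ (1,2)` and mean `μ₀`,
then for `β ∈ (0,1]` and `k ≥ 1` with `βk ≥ 1`,
`λ = log E[exp(β(ω−μ₀)1_{ω≤k})] ≤ C' e^{βk} β^α`, where `C'` depends only on `C`, `α`, `μ₀`. -/
theorem stmt15 (C α μ₀ : ℝ) (hC : 0 < C) (hα1 : 1 < α) (hα2 : α < 2) :
    ∃ C' : ℝ, 0 < C' ∧
      ∀ (Ω : Type) (_ : MeasurableSpace Ω) (μ : Measure Ω), IsProbabilityMeasure μ →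
      ∀ X : Ω → ℝ, Measurable X → (∀ a, 0 ≤ X a) → Integrable X μ →
        (∫ a, X a ∂μ) = μ₀ →
        (∀ t : ℝ, 1 ≤ t → (μ {a | t < X a}).toReal ≤ C * t ^ (-α)) →
        ∀ β k : ℝ, 0 < β → β ≤ 1 → 1 ≤ k → 1 ≤ β * k →
          Real.log (∫ a, Real.exp (if X a ≤ k then β * (X a - μ₀) else 0) ∂μ) ≤
            C' * Real.exp (β * k) * β ^ α := by
  set M₀ : ℝ := max 1 μ₀ with hM₀
  have hM₀1 : (1:ℝ) ≤ M₀ := le_max_left _ _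
  have hM₀μ : μ₀ ≤ M₀ := le_max_right _ _
  have hM₀0 : (0:ℝ) < M₀ := lt_of_lt_of_le one_pos hM₀1
  set C₂ : ℝ := 4 + 8 * C / (2 - α) with hC₂
  have hC₂0 : 0 < C₂ := by
    have : 0 ≤ 8 * C / (2 - α) := div_nonneg (by linarith) (by linarith)
    rw [hC₂]; linarith
  set K : ℝ := 4 * |μ₀| * C + 2 * C₂ + 2 * μ₀ ^ 2 + 4 * C with hK
  have hKpos : 0 < K := by positivity
  have h2M : (0:ℝ) < (2 * M₀) ^ α := Real.rpow_pos_of_pos (by linarith) _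
  refine ⟨(2 * M₀) ^ α + K, by positivity, ?_⟩
  intro Ω mΩ μ hμ X hX hXnn hXint hmean tail β k hβ0 hβ1 hk1 hβk
  have hμ₀nn : 0 ≤ μ₀ := hmean ▸ integral_nonneg hXnn
  have hXmint : Integrable (fun a => X a - μ₀) μ := hXint.sub (integrable_const μ₀)
  have habs : |μ₀| = μ₀ := abs_of_nonneg hμ₀nn
  have hk0 : (0:ℝ) < k := lt_of_lt_of_le one_pos hk1
  set Y : Ω → ℝ := fun a => if X a ≤ k then β * (X a - μ₀) else 0 with hY
  have hYm : Measurable Y := Measurable.ite (measurableSet_le hX measurable_const)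
    (((hX.sub measurable_const).const_mul β)) measurable_const
  have hYle : ∀ a, Y a ≤ β * k := by
    intro a
    rw [hY]
    by_cases h : X a ≤ k
    · simp only [h, if_true]
      nlinarith only [hXnn a, h, hμ₀nn, hβ0, hβ1, hk1]
    · simp only [h, if_false]; positivity
  have hYge : ∀ a, -μ₀ ≤ Y a := by
    intro a
    rw [hY]
    by_cases h : X a ≤ k
    · simp only [h, if_true]
      nlinarith only [hXnn a, hμ₀nn, hβ0, hβ1]
    · simp only [h, if_false]; linarith only [hμ₀nn]
  have hexpYm : Measurable fun a => Real.exp (Y a) := hYm.exp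
  have hexpYint : Integrable (fun a => Real.exp (Y a)) μ := by
    refine Integrable.mono' (integrable_const (Real.exp (β * k)))
      hexpYm.aestronglyMeasurable ?_
    filter_upwards with a
    rw [Real.norm_eq_abs, abs_of_nonneg (Real.exp_nonneg _)]
    exact Real.exp_le_exp.mpr (hYle a)
  set I : ℝ := ∫ a, Real.exp (Y a) ∂μ with hI
  have hIpos : 0 < I := by
    have h1 : Real.exp (-μ₀) ≤ I := by
      have h2 := integral_mono (μ := μ) (integrable_const (Real.exp (-μ₀))) hexpYint
        (fun a => Real.exp_le_exp.mpr (hYge a))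
      simpa using h2
    exact lt_of_lt_of_le (Real.exp_pos _) h1
  have hIe : I ≤ Real.exp (β * k) := by
    have h2 := integral_mono (μ := μ) hexpYint (integrable_const (Real.exp (β * k)))
      (fun a => Real.exp_le_exp.mpr (hYle a))
    simpa using h2
  have hβα : (0:ℝ) < β ^ α := Real.rpow_pos_of_pos hβ0 _
  by_cases hcase : β ≤ 1 / (2 * M₀)
  · -- main case
    set m : ℝ := 1 / (2 * β) with hm
    have hm0 : 0 < m := by rw [hm]; positivity
    have hβm : β * m = 1 / 2 := by rw [hm]; field_simp
    have hhalf : (1:ℝ)/(2*M₀) ≤ 1/2 := by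
      apply one_div_le_one_div_of_le (by norm_num)
      linarith only [hM₀1, hM₀0]
    have hβhalf : β ≤ 1/2 := le_trans hcase hhalf
    have hm1 : (1:ℝ) ≤ m := by
      rw [hm, le_div_iff₀ (by positivity)]
      linarith only [hβhalf, hβ0]
    have hβμ : β * μ₀ ≤ 1 / 2 := by
      have h1 : β * μ₀ ≤ (1/(2*M₀)) * μ₀ := mul_le_mul_of_nonneg_right hcase hμ₀nn
      have h2 : (1/(2*M₀)) * μ₀ ≤ 1/2 := by
        rw [div_mul_eq_mul_div, one_mul, div_le_div_iff₀ (by linarith) (by norm_num)]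
        linarith only [hM₀μ]
      linarith only [h1, h2]
    have hmk : m ≤ k := by
      have h1 : (1:ℝ)/β ≤ k := by
        rw [div_le_iff₀ hβ0]; nlinarith only [hβk]
      have h2 : m ≤ 1/β := by
        rw [hm]
        apply one_div_le_one_div_of_le hβ0
        linarith only [hβ0]
      linarith only [h1, h2]
    set E : Set Ω := {a | X a ≤ m} with hE
    have hEm : MeasurableSet E := measurableSet_le hX measurable_const
    have hEc : Eᶜ = {a | m < X a} := by
      ext a; simp [hE, not_le]
    have htailm : (μ Eᶜ).toReal ≤ C * m ^ (-α) := by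
      rw [hEc]; exact tail m hm1
    -- split
    have hsplit : (∫ a in E, Real.exp (Y a) ∂μ) + (∫ a in Eᶜ, Real.exp (Y a) ∂μ) = I :=
      integral_add_compl hEm hexpYint
    -- complement bound
    have hcomp : ∫ a in Eᶜ, Real.exp (Y a) ∂μ ≤ Real.exp (β * k) * (μ Eᶜ).toReal := by
      have h1 : ∫ a in Eᶜ, Real.exp (Y a) ∂μ ≤ ∫ _ in Eᶜ, Real.exp (β * k) ∂μ := by
        refine setIntegral_mono_on hexpYint.integrableOn ?_ hEm.compl ?_
        · exact integrableOn_const (measure_lt_top _ _).ne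
        · intro a _; exact Real.exp_le_exp.mpr (hYle a)
      rw [setIntegral_const, smul_eq_mul, mul_comm] at h1
      exact h1
    -- main set bound
    have hpt : ∀ a ∈ E, Real.exp (Y a) ≤
        1 + β * (X a - μ₀) + β ^ 2 * (X a - μ₀) ^ 2 := by
      intro a haE
      have hXa : X a ≤ m := haE
      have hYa : Y a = β * (X a - μ₀) := if_pos (le_trans hXa hmk)
      have habs1 : |β * (X a - μ₀)| ≤ 1 := by
        rw [abs_le]
        constructor
        · nlinarith only [hXnn a, hβμ, hβ0, hμ₀nn]
        · nlinarith only [hXnn a, mul_le_mul_of_nonneg_left hXa hβ0.le, hβm, hβ0, hμ₀nn]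
      have := taylor_exp habs1
      rw [hYa]
      calc Real.exp (β * (X a - μ₀)) ≤ 1 + β * (X a - μ₀) + (β * (X a - μ₀)) ^ 2 := this
        _ = 1 + β * (X a - μ₀) + β ^ 2 * (X a - μ₀) ^ 2 := by ring
    -- integrability on E
    have hbnd : ∀ a ∈ E, |X a - μ₀| ≤ m + μ₀ := by
      intro a ha
      have hXa : X a ≤ m := ha
      rw [abs_le]
      constructor <;> [nlinarith only [hXnn a, hXa, hμ₀nn, hm1]; nlinarith only [hXnn a, hXa, hμ₀nn, hm1]]
    have hsqint : IntegrableOn (fun a => (X a - μ₀) ^ 2) E μ := by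
      refine Integrable.mono' (integrable_const ((m + μ₀) ^ 2))
        (((hX.sub measurable_const).pow_const 2).aestronglyMeasurable) ?_
      rw [ae_restrict_iff' hEm]
      filter_upwards with a ha
      rw [Real.norm_eq_abs, abs_of_nonneg (sq_nonneg _)]
      have h1 := hbnd a ha
      nlinarith only [abs_nonneg (X a - μ₀), sq_abs (X a - μ₀), h1]
    have hsubint : IntegrableOn (fun a => X a - μ₀) E μ := hXmint.integrableOn
    have hgint : IntegrableOn
        (fun a => 1 + β * (X a - μ₀) + β ^ 2 * (X a - μ₀) ^ 2) E μ := by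
      refine Integrable.add (Integrable.add ?_ ?_) ?_
      · exact integrableOn_const (measure_lt_top _ _).ne
      · exact hsubint.const_mul β
      · exact hsqint.const_mul _
    have hEbound : ∫ a in E, Real.exp (Y a) ∂μ ≤
        (μ E).toReal + β * (∫ a in E, (X a - μ₀) ∂μ)
          + β ^ 2 * (∫ a in E, (X a - μ₀) ^ 2 ∂μ) := by
      have h1 : ∫ a in E, Real.exp (Y a) ∂μ ≤
          ∫ a in E, (1 + β * (X a - μ₀) + β ^ 2 * (X a - μ₀) ^ 2) ∂μ :=
        setIntegral_mono_on hexpYint.integrableOn hgint hEm hpt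
      have i1 : IntegrableOn (fun _ => (1:ℝ)) E μ :=
        integrableOn_const (measure_lt_top _ _).ne
      have i2 : IntegrableOn (fun a => β * (X a - μ₀)) E μ := hsubint.const_mul β
      have i3 : IntegrableOn (fun a => β ^ 2 * (X a - μ₀) ^ 2) E μ := hsqint.const_mul _
      have e1 : ∫ a in E, (1 + β * (X a - μ₀) + β ^ 2 * (X a - μ₀) ^ 2) ∂μ
          = (∫ a in E, (1 + β * (X a - μ₀)) ∂μ)
            + ∫ a in E, β ^ 2 * (X a - μ₀) ^ 2 ∂μ :=
        integral_add (i1.add i2) i3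
      have e2 : ∫ a in E, (1 + β * (X a - μ₀)) ∂μ
          = (∫ _ in E, (1:ℝ) ∂μ) + ∫ a in E, β * (X a - μ₀) ∂μ :=
        integral_add i1 i2
      have e3 : ∫ _ in E, (1:ℝ) ∂μ = (μ E).toReal := by simp [measureReal_def]
      have e4 : ∫ a in E, β * (X a - μ₀) ∂μ = β * ∫ a in E, (X a - μ₀) ∂μ :=
        integral_const_mul β _
      have e5 : ∫ a in E, β ^ 2 * (X a - μ₀) ^ 2 ∂μ
          = β ^ 2 * ∫ a in E, (X a - μ₀) ^ 2 ∂μ :=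
        integral_const_mul _ _
      linarith only [h1, e1, e2, e3, e4, e5]
    -- first moment bound
    have hfm : ∫ a in E, (X a - μ₀) ∂μ ≤ μ₀ * (μ Eᶜ).toReal := by
      have hadd := integral_add_compl hEm hXmint
      have hz : ∫ a, (X a - μ₀) ∂μ = 0 := by
        rw [integral_sub hXint (integrable_const _), hmean]
        simp
      have hcsplit : ∫ a in Eᶜ, (X a - μ₀) ∂μ
          = (∫ a in Eᶜ, X a ∂μ) - μ₀ * (μ Eᶜ).toReal := by
        rw [integral_sub hXint.integrableOn
          (integrableOn_const (measure_lt_top _ _).ne),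
          setIntegral_const, measureReal_def, smul_eq_mul, mul_comm]
      have hXc : 0 ≤ ∫ a in Eᶜ, X a ∂μ :=
        setIntegral_nonneg hEm.compl (fun a _ => hXnn a)
      rw [hz] at hadd
      linarith only [hadd, hz, hcsplit, hXc]
    -- second moment bound
    have hminint : Integrable (fun a => (min (X a) m) ^ 2) μ := by
      refine Integrable.mono' (integrable_const (m ^ 2))
        (((hX.min measurable_const).pow_const 2).aestronglyMeasurable) ?_
      filter_upwards with a
      rw [Real.norm_eq_abs, abs_of_nonneg (sq_nonneg _)]
      have h1 : min (X a) m ≤ m := min_le_right _ _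
      have h0 : 0 ≤ min (X a) m := le_min (hXnn a) hm0.le
      nlinarith only [h1, h0]
    have hminint2 : Integrable (fun a => 2 * (min (X a) m) ^ 2 + 2 * μ₀ ^ 2) μ :=
      (hminint.const_mul 2).add (integrable_const _)
    have hsm : ∫ a in E, (X a - μ₀) ^ 2 ∂μ ≤ 2 * C₂ * m ^ (2 - α) + 2 * μ₀ ^ 2 := by
      have hptw : ∀ a ∈ E, (X a - μ₀) ^ 2 ≤ 2 * (min (X a) m) ^ 2 + 2 * μ₀ ^ 2 := by
        intro a ha
        have hXa : X a ≤ m := ha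
        rw [min_eq_left hXa]
        nlinarith only [hXnn a, sq_nonneg (X a + μ₀)]
      have h1 : ∫ a in E, (X a - μ₀) ^ 2 ∂μ ≤
          ∫ a in E, (2 * (min (X a) m) ^ 2 + 2 * μ₀ ^ 2) ∂μ :=
        setIntegral_mono_on hsqint hminint2.integrableOn hEm hptw
      have h2 : ∫ a in E, (2 * (min (X a) m) ^ 2 + 2 * μ₀ ^ 2) ∂μ ≤
          ∫ a, (2 * (min (X a) m) ^ 2 + 2 * μ₀ ^ 2) ∂μ :=
        setIntegral_le_integral hminint2
          (Filter.Eventually.of_forall (fun a => by positivity))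
      have h3 : ∫ a, (2 * (min (X a) m) ^ 2 + 2 * μ₀ ^ 2) ∂μ
          = 2 * (∫ a, (min (X a) m) ^ 2 ∂μ) + 2 * μ₀ ^ 2 := by
        rw [integral_add (hminint.const_mul 2) (integrable_const _),
          integral_const_mul]
        simp
      have h4 := second_moment hC hα1 hα2 μ X hX hXnn tail m hm1
      rw [← hC₂] at h4
      linarith only [h1, h2, h3, h4]
    -- probability of E
    have hPE : (μ E).toReal ≤ 1 :=
      ENNReal.toReal_le_of_le_ofReal one_pos.le (by simpa using prob_le_one)
    have hPEc : 0 ≤ (μ Eᶜ).toReal := ENNReal.toReal_nonneg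
    -- rpow arithmetic
    have h2β : (0:ℝ) < 2 * β := by linarith only [hβ0]
    have hmα : m ^ (-α) = (2 * β) ^ α := by
      rw [hm, one_div, Real.inv_rpow h2β.le, Real.rpow_neg h2β.le, inv_inv]
    have h2α4 : (2:ℝ) ^ α ≤ 4 := by
      calc (2:ℝ) ^ α ≤ (2:ℝ) ^ (2:ℝ) :=
            Real.rpow_le_rpow_of_exponent_le (by norm_num) hα2.le
        _ = 4 := by
            rw [show (2:ℝ) = ((2:ℕ):ℝ) by norm_num, Real.rpow_natCast]; norm_num
    have hmα4 : m ^ (-α) ≤ 4 * β ^ α := by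
      rw [hmα, Real.mul_rpow (by norm_num) hβ0.le]
      exact mul_le_mul_of_nonneg_right h2α4 hβα.le
    have hm2αeq : β ^ 2 * m ^ (2 - α) ≤ β ^ α := by
      have h1 : m ^ (2 - α) = (2 * β) ^ (α - 2) := by
        rw [hm, one_div, Real.inv_rpow h2β.le, ← Real.rpow_neg h2β.le]
        ring_nf
      have h2 : (2 * β) ^ (α - 2) = 2 ^ (α - 2) * β ^ (α - 2) :=
        Real.mul_rpow (by norm_num) hβ0.le
      have h3 : (2:ℝ) ^ (α - 2) ≤ 1 :=
        Real.rpow_le_one_of_one_le_of_nonpos (by norm_num) (by linarith)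
      have h4 : β ^ (2:ℝ) * β ^ (α - 2) = β ^ α := by
        rw [← Real.rpow_add hβ0]; ring_nf
      have h5 : β ^ (2:ℕ) = β ^ (2:ℝ) := by
        rw [show (2:ℝ) = ((2:ℕ):ℝ) by norm_num, Real.rpow_natCast]
      have h6 : 0 < β ^ (α - 2) := Real.rpow_pos_of_pos hβ0 _
      have h7 : 0 ≤ β ^ (2:ℝ) := (Real.rpow_pos_of_pos hβ0 _).le
      calc β ^ 2 * m ^ (2 - α) = β ^ (2:ℝ) * (2 ^ (α - 2) * β ^ (α - 2)) := by
            rw [h1, h2, h5]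
        _ ≤ β ^ (2:ℝ) * (1 * β ^ (α - 2)) := by
            apply mul_le_mul_of_nonneg_left _ h7
            exact mul_le_mul_of_nonneg_right h3 h6.le
        _ = β ^ α := by rw [one_mul, h4]
    have hβ2α : β ^ 2 ≤ β ^ α := by
      have h5 : β ^ (2:ℕ) = β ^ (2:ℝ) := by
        rw [show (2:ℝ) = ((2:ℕ):ℝ) by norm_num, Real.rpow_natCast]
      rw [h5]
      exact Real.rpow_le_rpow_of_exponent_ge hβ0 hβ1 (by linarith)
    have he1 : (1:ℝ) ≤ Real.exp (β * k) := by
      rw [Real.one_le_exp_iff]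
      positivity
    -- term bounds
    have t1 : β * (∫ a in E, (X a - μ₀) ∂μ) ≤ 4 * μ₀ * C * β ^ α := by
      have h1 := mul_le_mul_of_nonneg_left hfm hβ0.le
      have h2 : μ₀ * (μ Eᶜ).toReal ≤ μ₀ * (C * m ^ (-α)) :=
        mul_le_mul_of_nonneg_left htailm hμ₀nn
      have h3 : μ₀ * (C * m ^ (-α)) ≤ μ₀ * (C * (4 * β ^ α)) := by
        apply mul_le_mul_of_nonneg_left _ hμ₀nn
        exact mul_le_mul_of_nonneg_left hmα4 hC.le
      have h4 : β * (μ₀ * (μ Eᶜ).toReal) ≤ μ₀ * (μ Eᶜ).toReal := by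
        nlinarith only [mul_nonneg hμ₀nn hPEc, hβ1]
      have h5 : μ₀ * (C * (4 * β ^ α)) = 4 * μ₀ * C * β ^ α := by ring
      linarith only [h1, h2, h3, h4, h5]
    have t2 : β ^ 2 * (∫ a in E, (X a - μ₀) ^ 2 ∂μ) ≤
        2 * C₂ * β ^ α + 2 * μ₀ ^ 2 * β ^ α := by
      have h1 := mul_le_mul_of_nonneg_left hsm (sq_nonneg β)
      have h2 : 2 * C₂ * (β ^ 2 * m ^ (2 - α)) ≤ 2 * C₂ * β ^ α :=
        mul_le_mul_of_nonneg_left hm2αeq (by positivity)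
      have h3 : 2 * μ₀ ^ 2 * β ^ 2 ≤ 2 * μ₀ ^ 2 * β ^ α :=
        mul_le_mul_of_nonneg_left hβ2α (by positivity)
      linarith only [h1, h2, h3]
    have t3 : Real.exp (β * k) * (μ Eᶜ).toReal ≤
        4 * C * Real.exp (β * k) * β ^ α := by
      have h1 : (μ Eᶜ).toReal ≤ C * (4 * β ^ α) := by
        calc (μ Eᶜ).toReal ≤ C * m ^ (-α) := htailm
          _ ≤ C * (4 * β ^ α) := mul_le_mul_of_nonneg_left hmα4 hC.le
      have h2 := mul_le_mul_of_nonneg_left h1 (Real.exp_pos (β * k)).le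
      have h3 : Real.exp (β * k) * (C * (4 * β ^ α))
          = 4 * C * Real.exp (β * k) * β ^ α := by ring
      linarith only [htailm, h2, h3]
    -- combine
    have hIbound : I ≤ 1 + K * Real.exp (β * k) * β ^ α := by
      have hsum : 4 * μ₀ * C * β ^ α + 2 * C₂ * β ^ α + 2 * μ₀ ^ 2 * β ^ α
          + 4 * C * Real.exp (β * k) * β ^ α ≤ K * Real.exp (β * k) * β ^ α := by
        rw [hK, habs]
        have hprod : 0 ≤ (Real.exp (β * k) - 1)
            * (4 * μ₀ * C + 2 * C₂ + 2 * μ₀ ^ 2) * β ^ α :=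
          mul_nonneg (mul_nonneg (sub_nonneg.2 he1)
            (by positivity)) hβα.le
        nlinarith only [hprod]
      linarith only [hsplit, hEbound, hcomp, hfm, t1, t2, t3, hPE, hsum]
    have hlog := Real.log_le_sub_one_of_pos hIpos
    have hfin : K * Real.exp (β * k) * β ^ α ≤
        ((2 * M₀) ^ α + K) * Real.exp (β * k) * β ^ α := by
      have hprod : 0 ≤ (2 * M₀) ^ α * Real.exp (β * k) * β ^ α :=
        mul_nonneg (mul_nonneg h2M.le (Real.exp_pos (β * k)).le) hβα.le
      linarith only [hprod]
    linarith only [hlog, hIbound, hfin]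
  · -- easy case : β > 1/(2 M₀)
    push_neg at hcase
    have hlog : Real.log I ≤ β * k := by
      calc Real.log I ≤ Real.log (Real.exp (β * k)) :=
            Real.log_le_log hIpos hIe
        _ = β * k := Real.log_exp _
    have h1 : (1:ℝ) ≤ (2 * M₀) ^ α * β ^ α := by
      rw [← Real.mul_rpow (by linarith) hβ0.le]
      refine Real.one_le_rpow ?_ (by linarith)
      rw [div_lt_iff₀ (by linarith)] at hcase
      linarith only [hcase, hM₀0]
    have h2 : β * k ≤ Real.exp (β * k) := by
      have := Real.add_one_le_exp (β * k)
      linarith only [this]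
    calc Real.log I ≤ β * k := hlog
      _ ≤ Real.exp (β * k) := h2
      _ ≤ (2 * M₀) ^ α * β ^ α * Real.exp (β * k) := by
          have h4 := mul_le_mul_of_nonneg_right h1 (Real.exp_pos (β * k)).le
          linarith only [h4]
      _ ≤ ((2 * M₀) ^ α + K) * Real.exp (β * k) * β ^ α := by
          have h3 : 0 ≤ K * (Real.exp (β * k) * β ^ α) :=
            mul_nonneg hKpos.le (mul_pos (Real.exp_pos _) hβα).le
          linarith only [h3]
end
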